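/- The number of labelled graphs on vertex set {1, ..., n} with neighbourhood diversity at most k is at most k^n · 2^{binom(k,2) + k}. -/

import Mathlib

/-- Two vertices are similar if no third vertex is adjacent to exactly one of them. -/
def NdSimilar {V : Type} (G : SimpleGraph V) (x y : V) : Prop :=
  ∀ z, z ≠ x → z ≠ y → (G.Adj z x ↔ G.Adj z y)

/-- The neighbourhood diversity of `G`: the number of similarity classes. -/
noncomputable def ndiv {V : Type} (G : SimpleGraph V) : ℕ :=
  Nat.card ↥(Set.range fun v : V => {u : V | NdSimilar G v u})

lemma adj_of_similar_right {V : Type} {G : SimpleGraph V} {x y y' : V}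
    (h : NdSimilar G y y') (ha : G.Adj x y') (hxy : x ≠ y) : G.Adj x y := by
  by_cases hyy : y = y'
  · exact hyy ▸ ha
  · have hxy' : x ≠ y' := by rintro rfl; exact G.irrefl ha
    exact (h x hxy hxy').mpr ha

lemma adj_key {V : Type} {G : SimpleGraph V} {x x' y y' : V}
    (hx : NdSimilar G x x') (hy : NdSimilar G y y') (h : G.Adj x' y') (hxy : x ≠ y) :
    G.Adj x y := by
  by_cases hx' : x = y'
  · subst hx'
    by_cases hy' : y = x'
    · subst hy'; exact h.symm
    · have h1 : G.Adj x' y := adj_of_similar_right hy h (Ne.symm hy')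
      have h2 : G.Adj y x := adj_of_similar_right hx h1.symm (Ne.symm hxy)
      exact h2.symm
  · have h1 : G.Adj y' x := adj_of_similar_right hx h.symm (Ne.symm hx')
    exact adj_of_similar_right hy h1.symm hxy

lemma similar_of_cl_eq {V : Type} {G : SimpleGraph V} {u u' : V}
    (h : {w | NdSimilar G u w} = {w | NdSimilar G u' w}) : NdSimilar G u u' := by
  have : u' ∈ {w | NdSimilar G u' w} := fun z _ _ => Iff.rfl
  rw [← h] at this
  exact this

/-- The number of labelled graphs on `n` vertices with neighbourhood diversity at most `k`
is at most `k^n · 2^{C(k,2)+k}`. -/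
theorem count_graphs_with_bounded_diversity (n k : ℕ) :
    Nat.card {G : SimpleGraph (Fin n) // ndiv G ≤ k}
      ≤ k ^ n * 2 ^ (Nat.choose k 2 + k) := by
  classical
  set cl : SimpleGraph (Fin n) → Fin n → Set (Fin n) :=
    fun G v => {u | NdSimilar G v u} with hcl
  have hemb : ∀ G : {G : SimpleGraph (Fin n) // ndiv G ≤ k},
      ∃ e : ↥(Set.range (cl G.1)) → Fin k, Function.Injective e := by
    rintro ⟨G, hG⟩
    have : Fintype ↥(Set.range (cl G)) := Fintype.ofFinite _
    have hcard : Fintype.card ↥(Set.range (cl G)) ≤ Fintype.card (Fin k) := by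
      rw [Fintype.card_fin, ← Nat.card_eq_fintype_card]
      exact hG
    obtain ⟨f⟩ := Function.Embedding.nonempty_of_card_le hcard
    exact ⟨f, f.injective⟩
  choose e he using hemb
  set φ : {G : SimpleGraph (Fin n) // ndiv G ≤ k} → Fin n → Fin k :=
    fun G v => e G ⟨cl G.1 v, ⟨v, rfl⟩⟩ with hφ
  set f : {G : SimpleGraph (Fin n) // ndiv G ≤ k} → Sym2 (Fin k) → Prop :=
    fun G s => ∃ u v : Fin n, G.1.Adj u v ∧ s = s(φ G u, φ G v) with hf
  have hsim : ∀ (G : {G : SimpleGraph (Fin n) // ndiv G ≤ k}) (u u' : Fin n),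
      φ G u = φ G u' → NdSimilar G.1 u u' := by
    intro G u u' h
    have : cl G.1 u = cl G.1 u' := by
      have := he G (a₁ := ⟨cl G.1 u, ⟨u, rfl⟩⟩) (a₂ := ⟨cl G.1 u', ⟨u', rfl⟩⟩) h
      exact congrArg Subtype.val this
    exact similar_of_cl_eq this
  have decode : ∀ (G : {G : SimpleGraph (Fin n) // ndiv G ≤ k}) (u v : Fin n), u ≠ v →
      (G.1.Adj u v ↔ f G s(φ G u, φ G v)) := by
    intro G u v huv
    constructor
    · intro h; exact ⟨u, v, h, rfl⟩
    · rintro ⟨u', v', hadj, hs⟩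
      rw [Sym2.eq_iff] at hs
      rcases hs with ⟨h1, h2⟩ | ⟨h1, h2⟩
      · exact adj_key (hsim G u u' h1) (hsim G v v' h2) hadj huv
      · exact adj_key (hsim G u v' h1) (hsim G v u' h2) hadj.symm huv
  have hinj : Function.Injective (fun G : {G : SimpleGraph (Fin n) // ndiv G ≤ k} =>
      (φ G, f G)) := by
    intro G G' hGG
    have h1 : φ G = φ G' := congrArg Prod.fst hGG
    have h2 : f G = f G' := congrArg Prod.snd hGG
    apply Subtype.ext
    ext u v
    by_cases huv : u = v
    · subst huv; simp
    · rw [decode G u v huv, decode G' u v huv, h1, h2]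
  calc Nat.card {G : SimpleGraph (Fin n) // ndiv G ≤ k}
      ≤ Nat.card ((Fin n → Fin k) × (Sym2 (Fin k) → Prop)) :=
        Nat.card_le_card_of_injective _ hinj
    _ = k ^ n * 2 ^ (Nat.choose k 2 + k) := by
        rw [Nat.card_eq_fintype_card, Fintype.card_prod, Fintype.card_fun,
          Fintype.card_fun, Fintype.card_fin, Fintype.card_fin, Fintype.card_prop,
          Sym2.card, Fintype.card_fin]
        congr 1
        rw [Nat.choose_succ_succ, Nat.choose_one_right, Nat.add_comm]
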